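/- For a binary relation R on S, the condition that A^l ⊆ A ⊆ A^u holds for every subset A (where A^l = ⋃{[x] : [x] ⊆ A, x ∈ A} and A^u = ⋃{[x] : [x] ∩ A ≠ ∅, x ∈ A}, with [x] = {y : (x,y) ∈ R}) is equivalent to reflexivity of R. -/
import Mathlib

open Set

/-- The set of `R`-relateds of `x`. -/
def rcls {α : Type*} (R : α → α → Prop) (x : α) : Set α := {y | R x y}

/-- `A^l = ⋃{[x] : x ∈ A, [x] ⊆ A}`. -/
def rlow {α : Type*} (R : α → α → Prop) (A : Set α) : Set α :=
  ⋃₀ {B | ∃ x ∈ A, B = rcls R x ∧ rcls R x ⊆ A}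

/-- `A^u = ⋃{[x] : x ∈ A, [x] ∩ A ≠ ∅}`. -/
def rupp {α : Type*} (R : α → α → Prop) (A : Set α) : Set α :=
  ⋃₀ {B | ∃ x ∈ A, B = rcls R x ∧ (rcls R x ∩ A).Nonempty}

theorem stmt8 {α : Type*} (R : α → α → Prop) :
    (∀ A : Set α, rlow R A ⊆ A ∧ A ⊆ rupp R A) ↔ Reflexive R := by
  constructor
  · intro h x
    have hx := (h {x}).2 (mem_singleton x)
    obtain ⟨B, ⟨y, hy, rfl, _⟩, hxB⟩ := hx
    have : y = x := hy
    subst this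
    exact hxB
  · intro hrefl
    intro A
    constructor
    · intro y hy
      obtain ⟨B, ⟨x, _, rfl, hsub⟩, hyB⟩ := hy
      exact hsub hyB
    · intro x hx
      exact ⟨rcls R x, ⟨x, hx, rfl, ⟨x, hrefl x, hx⟩⟩, hrefl x⟩
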